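/- Every continuous function from the ordinal space [0, ω₁) (ordinals below the first uncountable ordinal, with the order topology) to ℝ is eventually constant. -/
import Mathlib

open Cardinal Ordinal Set Filter Topology

universe u

private lemma omega1_sup_lt (g : ℕ → (Set.Iio (Cardinal.aleph 1).ord : Set Ordinal.{u})) :
    (⨆ n, (g n : Ordinal)) < (Cardinal.aleph 1).ord := by
  refine Ordinal.iSup_lt_ord_lift ?_ fun n => (g n).2
  rw [Cardinal.isRegular_aleph_one.cof_eq, Cardinal.mk_nat, Cardinal.lift_aleph0]
  exact Cardinal.aleph0_lt_aleph_one

private lemma key (f : (Set.Iio (Cardinal.aleph 1).ord : Set Ordinal.{u}) → ℝ)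
    (hf : Continuous f) {ε : ℝ} (hε : 0 < ε) :
    ∃ a : (Set.Iio (Cardinal.aleph 1).ord : Set Ordinal),
      ∀ b, a ≤ b → |f b - f a| ≤ ε := by
  by_contra h
  push_neg at h
  -- h : ∀ a, ∃ b, a ≤ b ∧ ε < |f b - f a|
  choose g hg1 hg2 using h
  have h0 : (0 : Ordinal) < (Cardinal.aleph 1).ord := by
    rw [Cardinal.lt_ord]; simpa using Cardinal.aleph_pos 1
  let x : ℕ → (Set.Iio (Cardinal.aleph 1).ord : Set Ordinal) :=
    fun n => Nat.rec ⟨0, h0⟩ (fun _ p => g p) n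
  have hx : ∀ n, x n ≤ x (n + 1) := fun n => hg1 (x n)
  have hmono : Monotone x := monotone_nat_of_le_succ hx
  have hcmono : Monotone (fun n => (x n).1) := by
    intro i j hij
    exact Subtype.coe_le_coe.mpr (hmono hij)
  have hsup : (⨆ n, (x n).1) < (Cardinal.aleph 1).ord := omega1_sup_lt x
  set xb : (Set.Iio (Cardinal.aleph 1).ord : Set Ordinal) := ⟨_, hsup⟩ with hxb
  have htends : Tendsto x atTop (𝓝 xb) := by
    rw [Topology.IsInducing.subtypeVal.tendsto_nhds_iff]
    exact tendsto_atTop_ciSup hcmono (Ordinal.bddAbove_range _)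
  have hftends : Tendsto (fun n => f (x n)) atTop (𝓝 (f xb)) :=
    (hf.tendsto xb).comp htends
  have hc : CauchySeq fun n => f (x n) := hftends.cauchySeq
  obtain ⟨N, hN⟩ := Metric.cauchySeq_iff'.mp hc ε hε
  have h1 := hN (N + 1) (Nat.le_succ N)
  have h2 := hg2 (x N)
  rw [Real.dist_eq] at h1
  exact absurd h1 (not_lt.mpr (le_of_lt h2))

/-- Every continuous function from `[0, ω₁)` to `ℝ` is eventually constant. -/
theorem continuous_omega1_eventually_constant
    (f : (Set.Iio (Cardinal.aleph 1).ord : Set Ordinal) → ℝ) (hf : Continuous f) :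
    ∃ a : (Set.Iio (Cardinal.aleph 1).ord : Set Ordinal),
      ∀ b : (Set.Iio (Cardinal.aleph 1).ord : Set Ordinal), a ≤ b → f b = f a := by
  have key' : ∀ n : ℕ, ∃ a : (Set.Iio (Cardinal.aleph 1).ord : Set Ordinal),
      ∀ b, a ≤ b → |f b - f a| ≤ 1 / (n + 1) := fun n =>
    key f hf (by positivity)
  choose g hg using key'
  have hsup : (⨆ n, (g n : Ordinal)) < (Cardinal.aleph 1).ord := omega1_sup_lt g
  refine ⟨⟨_, hsup⟩, fun b hb => ?_⟩
  set a : (Set.Iio (Cardinal.aleph 1).ord : Set Ordinal) := ⟨_, hsup⟩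
  have hga : ∀ n, g n ≤ a := fun n =>
    le_ciSup (Ordinal.bddAbove_range fun n => ((g n : Ordinal))) n
  have habs : ∀ n : ℕ, |f b - f a| ≤ 2 / (n + 1) := by
    intro n
    have h1 := hg n b ((hga n).trans hb)
    have h2 := hg n a (hga n)
    calc |f b - f a| = |(f b - f (g n)) - (f a - f (g n))| := by ring_nf
      _ ≤ |f b - f (g n)| + |f a - f (g n)| := abs_sub _ _
      _ ≤ 1 / (n + 1) + 1 / (n + 1) := add_le_add h1 h2
      _ = 2 / (n + 1) := by ring
  have : |f b - f a| ≤ 0 := by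
    by_contra hpos
    push_neg at hpos
    obtain ⟨n, hn⟩ := exists_nat_gt (2 / |f b - f a|)
    have hn' : 2 / (n + 1 : ℝ) < |f b - f a| := by
      rw [div_lt_iff₀ (by positivity)]
      rw [div_lt_iff₀ hpos] at hn
      nlinarith
    exact absurd (habs n) (not_le.mpr hn')
  have := abs_nonneg (f b - f a)
  have : |f b - f a| = 0 := le_antisymm ‹|f b - f a| ≤ 0› this
  linarith [abs_eq_zero.mp this, sub_eq_zero.mp (abs_eq_zero.mp this)]
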